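/- Let q be a prime power and F_q a finite field with q elements. The number of quadruples (a,b,c,d) ∈ F_q^4 such that the binary cubic form aX^3 + bX^2Y + cXY^2 + dY^3 has no nontrivial zero in F_q^2 (i.e., no zero (x,y) ≠ (0,0); equivalently, the form has three conjugate roots in a cubic extension) equals q(q^2−1)(q−1)/3. -/

import Mathlib

set_option linter.unusedSectionVars false

open Finset

namespace CountBinaryCubics

variable {F : Type*} [Field F] [Fintype F] [DecidableEq F]

/-- Evaluation of the monic cubic `X³ + b X² + c X + d` at `r`. -/
def cubEv (p : F × F × F) (r : F) : F := r ^ 3 + p.1 * r ^ 2 + p.2.1 * r + p.2.2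

/-- The root set of a monic cubic. -/
def cubR (p : F × F × F) : Finset F := univ.filter fun r => cubEv p r = 0

lemma card_root_one (r : F) :
    #(univ.filter fun p : F × F × F => cubEv p r = 0) = Fintype.card F ^ 2 := by
  rw [show Fintype.card F ^ 2 = #(univ : Finset (F × F)) by simp [sq]]
  refine card_nbij' (fun p => (p.1, p.2.1)) (fun bc => (bc.1, bc.2, -(r^3 + bc.1*r^2 + bc.2*r)))
    (by simp) (by intro a _; simp only [mem_coe, mem_filter, mem_univ, true_and]; simp only [cubEv]; ring) ?_ (by intro x _; simp)
  · rintro ⟨b, c, d⟩ hp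
    simp only [mem_coe, mem_filter] at hp; simp only [cubEv] at hp
    exact Prod.ext rfl (Prod.ext rfl (by linear_combination -hp.2))

lemma card_root_two {r s : F} (hrs : r ≠ s) :
    #(univ.filter fun p : F × F × F => cubEv p r = 0 ∧ cubEv p s = 0) = Fintype.card F := by
  rw [← Finset.card_univ]
  refine card_nbij' (fun p => p.1)
    (fun b => (b, -(b*(r+s) + (r^2+r*s+s^2)),
      -(s^3 + b*s^2 + (-(b*(r+s) + (r^2+r*s+s^2)))*s)))
    (by simp) (by intro b _; simp only [mem_coe, mem_filter, mem_univ, true_and]; simp only [cubEv]; constructor <;> ring)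
    ?_ (by intro x _; simp)
  · rintro ⟨b, c, d⟩ hp
    simp only [mem_coe, mem_filter] at hp; simp only [cubEv] at hp
    obtain ⟨-, h1, h2⟩ := hp
    have hc : c = -(b*(r+s) + (r^2+r*s+s^2)) := by
      have h3 : (r - s) * (c + (b*(r+s) + (r^2+r*s+s^2))) = 0 := by linear_combination h1 - h2
      have h4 := (mul_eq_zero.1 h3).resolve_left (sub_ne_zero.2 hrs)
      linear_combination h4
    refine Prod.ext rfl (Prod.ext hc.symm ?_)
    simp only
    rw [← hc]
    linear_combination -h2

/-- Distinct roots determine the coefficients of a monic cubic. -/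
lemma coeffs_of_roots {r s t : F} {p : F × F × F} (hrs : r ≠ s) (hrt : r ≠ t) (hst : s ≠ t)
    (h1 : cubEv p r = 0) (h2 : cubEv p s = 0) (h3 : cubEv p t = 0) :
    p = (-(r + s + t), r*s + r*t + s*t, -(r*s*t)) := by
  obtain ⟨b, c, d⟩ := p
  simp only [cubEv] at h1 h2 h3
  have e12 : (r - s) * (b*(r+s) + c + (r^2+r*s+s^2)) = 0 := by linear_combination h1 - h2
  have e13 : (r - t) * (b*(r+t) + c + (r^2+r*t+t^2)) = 0 := by linear_combination h1 - h3
  have f12 := (mul_eq_zero.1 e12).resolve_left (sub_ne_zero.2 hrs)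
  have f13 := (mul_eq_zero.1 e13).resolve_left (sub_ne_zero.2 hrt)
  have eb : (s - t) * (b + (r + s + t)) = 0 := by linear_combination f12 - f13
  have hb : b = -(r + s + t) := by
    have := (mul_eq_zero.1 eb).resolve_left (sub_ne_zero.2 hst)
    linear_combination this
  have hc : c = r*s + r*t + s*t := by linear_combination f12 - (r+s)*hb
  have hd : d = -(r*s*t) := by linear_combination h1 - r^2*hb - r*hc
  simp [hb, hc, hd]

lemma card_root_three {r s t : F} (hrs : r ≠ s) (hrt : r ≠ t) (hst : s ≠ t) :
    #(univ.filter fun p : F × F × F => cubEv p r = 0 ∧ cubEv p s = 0 ∧ cubEv p t = 0) = 1 := by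
  rw [show (univ.filter fun p : F × F × F => cubEv p r = 0 ∧ cubEv p s = 0 ∧ cubEv p t = 0)
      = {(-(r + s + t), r*s + r*t + s*t, -(r*s*t))} from ?_]
  · exact card_singleton _
  ext p
  simp only [mem_filter, mem_univ, true_and, mem_singleton]
  constructor
  · rintro ⟨h1, h2, h3⟩; exact coeffs_of_roots hrs hrt hst h1 h2 h3
  · rintro rfl
    refine ⟨?_, ?_, ?_⟩ <;> simp only [cubEv] <;> ring

lemma cubR_card_le (p : F × F × F) : #(cubR p) ≤ 3 := by
  by_contra h
  push_neg at h
  obtain ⟨T, hTsub, hT4⟩ := exists_subset_card_eq h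
  obtain ⟨r, hr⟩ : T.Nonempty := by rw [← card_pos, hT4]; norm_num
  have h3 : #(T.erase r) = 3 := by rw [card_erase_of_mem hr, hT4]
  obtain ⟨s, t, u, hst, hsu, htu, hE⟩ := card_eq_three.1 h3
  have hmem : ∀ x ∈ T, cubEv p x = 0 := fun x hx => (mem_filter.1 (hTsub hx)).2
  have hs : s ∈ T.erase r := by rw [hE]; simp
  have ht : t ∈ T.erase r := by rw [hE]; simp
  have hu : u ∈ T.erase r := by rw [hE]; simp
  have hrs : r ≠ s := fun e => (mem_erase.1 hs).1 e.symm
  have hrt : r ≠ t := fun e => (mem_erase.1 ht).1 e.symm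
  have hru : r ≠ u := fun e => (mem_erase.1 hu).1 e.symm
  have e1 := coeffs_of_roots hrs hrt hst (hmem r hr) (hmem s (mem_of_mem_erase hs))
    (hmem t (mem_of_mem_erase ht))
  have e2 := coeffs_of_roots hrs hru hsu (hmem r hr) (hmem s (mem_of_mem_erase hs))
    (hmem u (mem_of_mem_erase hu))
  rw [e1] at e2
  have : t = u := by
    have h1 := congrArg Prod.fst e2
    simp only at h1
    linear_combination -h1
  exact htu this

lemma sum_choose_j (j : ℕ) :
    ∑ p : F × F × F, (#(cubR p)).choose j
      = ∑ T ∈ powersetCard j (univ : Finset F),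
          #(univ.filter fun p : F × F × F => ∀ r ∈ T, cubEv p r = 0) := by
  have key : ∀ p : F × F × F, (#(cubR p)).choose j
      = ∑ T ∈ powersetCard j (univ : Finset F), if ∀ r ∈ T, cubEv p r = 0 then 1 else 0 := by
    intro p
    rw [← card_powersetCard j (cubR p)]
    rw [show powersetCard j (cubR p)
        = (powersetCard j (univ : Finset F)).filter (fun T => ∀ r ∈ T, cubEv p r = 0) from ?_]
    · rw [card_filter]
    ext T
    simp only [mem_powersetCard, mem_filter, subset_iff, cubR, mem_filter, mem_univ, true_and]
    tauto
  simp_rw [key]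
  rw [Finset.sum_comm]
  congr 1
  ext T
  rw [card_filter]

lemma sum_choose_one :
    ∑ p : F × F × F, (#(cubR p)).choose 1 = Fintype.card F ^ 3 := by
  rw [sum_choose_j]
  have : ∀ T ∈ powersetCard 1 (univ : Finset F),
      #(univ.filter fun p : F × F × F => ∀ r ∈ T, cubEv p r = 0) = Fintype.card F ^ 2 := by
    intro T hT
    obtain ⟨r, rfl⟩ := card_eq_one.1 (mem_powersetCard.1 hT).2
    rw [← card_root_one r]
    congr 1; ext p; simp
  rw [Finset.sum_congr rfl this, Finset.sum_const, card_powersetCard, card_univ,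
    Nat.choose_one_right, smul_eq_mul]
  ring

lemma sum_choose_two :
    ∑ p : F × F × F, (#(cubR p)).choose 2 = (Fintype.card F).choose 2 * Fintype.card F := by
  rw [sum_choose_j]
  have : ∀ T ∈ powersetCard 2 (univ : Finset F),
      #(univ.filter fun p : F × F × F => ∀ r ∈ T, cubEv p r = 0) = Fintype.card F := by
    intro T hT
    obtain ⟨r, s, hrs, rfl⟩ := card_eq_two.1 (mem_powersetCard.1 hT).2
    rw [← card_root_two hrs]
    congr 1; ext p
    simp only [mem_filter, mem_univ, true_and, mem_insert, mem_singleton]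
    constructor
    · intro h; exact ⟨h r (Or.inl rfl), h s (Or.inr rfl)⟩
    · rintro ⟨h1, h2⟩ x (rfl | rfl) <;> assumption
  rw [Finset.sum_congr rfl this, Finset.sum_const, card_powersetCard, card_univ, smul_eq_mul]

lemma sum_choose_three :
    ∑ p : F × F × F, (#(cubR p)).choose 3 = (Fintype.card F).choose 3 := by
  rw [sum_choose_j]
  have : ∀ T ∈ powersetCard 3 (univ : Finset F),
      #(univ.filter fun p : F × F × F => ∀ r ∈ T, cubEv p r = 0) = 1 := by
    intro T hT
    obtain ⟨r, s, t, hrs, hrt, hst, rfl⟩ := card_eq_three.1 (mem_powersetCard.1 hT).2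
    rw [← card_root_three hrs hrt hst]
    congr 1; ext p
    simp only [mem_filter, mem_univ, true_and, mem_insert, mem_singleton]
    constructor
    · intro h; exact ⟨h r (by tauto), h s (by tauto), h t (by tauto)⟩
    · rintro ⟨h1, h2, h3⟩ x (rfl | rfl | rfl) <;> assumption
  rw [Finset.sum_congr rfl this, Finset.sum_const, card_powersetCard, card_univ, smul_eq_mul,
    mul_one]

lemma two_mul_choose_two (n : ℕ) : 2 * n.choose 2 = n * (n - 1) := by
  induction n with
  | zero => rfl
  | succ m ih =>
    rw [Nat.choose_succ_succ, Nat.choose_one_right, Nat.succ_sub_one]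
    cases m with
    | zero => rfl
    | succ k =>
      rw [Nat.succ_sub_one] at ih
      nlinarith [ih]

lemma six_mul_choose_three (n : ℕ) : 6 * n.choose 3 = n * (n - 1) * (n - 2) := by
  have aux : ∀ m : ℕ, 6 * (m+3).choose 3 = (m+3) * (m+2) * (m+1) := by
    intro m
    induction m with
    | zero => decide
    | succ k ih =>
      have hcs : (k+4).choose 3 = (k+3).choose 2 + (k+3).choose 3 :=
        Nat.choose_succ_succ (k+3) 2
      have h2 : 2 * (k+3).choose 2 = (k+3) * (k+2) := by
        have := two_mul_choose_two (k+3); simpa using this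
      rw [hcs]
      nlinarith [ih, h2]
  match n with
  | 0 => rfl
  | 1 => rfl
  | 2 => rfl
  | (m+3) => simpa using aux m

/-- The number of monic cubics over `F` with no root in `F` is `(q³ - q)/3`. -/
lemma three_mul_rootless :
    3 * #(univ.filter fun p : F × F × F => ∀ r : F, cubEv p r ≠ 0)
      = Fintype.card F ^ 3 - Fintype.card F := by
  set q := Fintype.card F with hq
  have hfe : (univ.filter fun p : F × F × F => ∀ r : F, cubEv p r ≠ 0)
      = (univ.filter fun p : F × F × F => #(cubR p) = 0) := by
    apply filter_congr
    intro p _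
    simp [cubR, card_eq_zero, filter_eq_empty_iff]
  rw [hfe]
  set M := #(univ.filter fun p : F × F × F => #(cubR p) = 0) with hMdef
  have hM : (M : ℤ) = ∑ p : F × F × F, (if #(cubR p) = 0 then 1 else 0 : ℤ) := by
    rw [hMdef, card_filter]
    push_cast
    rfl
  have key : ∀ p : F × F × F, (if #(cubR p) = 0 then 1 else 0 : ℤ)
      = 1 - (#(cubR p)).choose 1 + (#(cubR p)).choose 2 - (#(cubR p)).choose 3 := by
    intro p
    have h := cubR_card_le p
    interval_cases h' : #(cubR p) <;> simp [Nat.choose]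
  rw [Finset.sum_congr rfl (fun p _ => key p)] at hM
  have hsum : (M : ℤ)
      = (Fintype.card (F × F × F) : ℤ) - (q:ℤ)^3 + ((q.choose 2 * q : ℕ) : ℤ)
        - ((q.choose 3 : ℕ) : ℤ) := by
    rw [hM, Finset.sum_sub_distrib, Finset.sum_add_distrib, Finset.sum_sub_distrib]
    congr 1
    congr 1
    congr 1
    · simp [card_univ]
    · rw [← Nat.cast_sum, sum_choose_one]; push_cast; ring
    · rw [← Nat.cast_sum, sum_choose_two]
    · rw [← Nat.cast_sum, sum_choose_three]
  have hcardP : (Fintype.card (F × F × F) : ℤ) = (q:ℤ)^3 := by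
    simp [Fintype.card_prod, ← hq]; ring
  rw [hcardP] at hsum
  have hq2 : 2 ≤ q := Fintype.one_lt_card
  have h2 := two_mul_choose_two q
  have h3 := six_mul_choose_three q
  have h2' : (2:ℤ) * ((q.choose 2 : ℕ) : ℤ) = (q:ℤ) * ((q:ℤ) - 1) := by
    zify [show 1 ≤ q by omega] at h2; linarith
  have h3' : (6:ℤ) * ((q.choose 3 : ℕ) : ℤ) = (q:ℤ) * ((q:ℤ) - 1) * ((q:ℤ) - 2) := by
    zify [show 1 ≤ q by omega, hq2] at h3; linarith
  have h6 : (6:ℤ) * (M : ℤ) = 2 * ((q:ℤ)^3 - (q:ℤ)) := by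
    have : (6:ℤ) * (M:ℤ) = 6 * ((q:ℤ)^3 - (q:ℤ)^3 + ((q.choose 2 * q : ℕ):ℤ)
        - ((q.choose 3 : ℕ):ℤ)) := by rw [hsum]
    rw [this]
    push_cast
    linear_combination 3*(q:ℤ)*h2' - h3'
  have hZ : (3:ℤ) * (M : ℤ) = (q:ℤ)^3 - (q:ℤ) := by linarith
  have hle : q ≤ q ^ 3 := by nlinarith
  rw [eq_comm, Nat.sub_eq_iff_eq_add hle]
  zify
  linarith [hZ]

lemma aniso_iff (a b c d : F) :
    (∀ x y : F, a * x ^ 3 + b * x ^ 2 * y + c * x * y ^ 2 + d * y ^ 3 = 0 → x = 0 ∧ y = 0)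
    ↔ a ≠ 0 ∧ ∀ r : F, a * r ^ 3 + b * r ^ 2 + c * r + d ≠ 0 := by
  constructor
  · intro H
    have ha : a ≠ 0 := by
      intro ha0
      have := H 1 0 (by simp [ha0])
      exact one_ne_zero this.1
    refine ⟨ha, fun r hr => ?_⟩
    have h0 : a * r ^ 3 + b * r ^ 2 * 1 + c * r * 1 ^ 2 + d * 1 ^ 3 = 0 := by
      linear_combination hr
    exact one_ne_zero (H r 1 h0).2
  · rintro ⟨ha, hroot⟩ x y h
    by_cases hy : y = 0
    · subst hy
      have hax : a * x ^ 3 = 0 := by linear_combination h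
      have hx3 : x ^ 3 = 0 := by
        rcases mul_eq_zero.1 hax with h' | h'
        · exact absurd h' ha
        · exact h'
      exact ⟨pow_eq_zero_iff (by norm_num) |>.1 hx3, rfl⟩
    · exfalso
      set r := x * y⁻¹ with hr
      have hx : x = r * y := by rw [hr]; field_simp
      apply hroot r
      have h' : y ^ 3 * (a * r ^ 3 + b * r ^ 2 + c * r + d) = 0 := by
        rw [hx] at h
        linear_combination h
      rcases mul_eq_zero.1 h' with h'' | h''
      · exact absurd h'' (pow_ne_zero 3 hy)
      · exact h''

lemma div_root_iff {a : F} (ha : a ≠ 0) (b c d : F) :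
    (∀ r : F, cubEv (b * a⁻¹, c * a⁻¹, d * a⁻¹) r ≠ 0)
    ↔ ∀ r : F, a * r ^ 3 + b * r ^ 2 + c * r + d ≠ 0 := by
  have key : ∀ r : F, a * cubEv (b * a⁻¹, c * a⁻¹, d * a⁻¹) r
      = a * r ^ 3 + b * r ^ 2 + c * r + d := by
    intro r
    simp only [cubEv]
    field_simp
  constructor
  · intro h r hr
    apply h r
    have : a * cubEv (b * a⁻¹, c * a⁻¹, d * a⁻¹) r = 0 := by rw [key, hr]
    exact (mul_eq_zero.1 this).resolve_left ha
  · intro h r hr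
    apply h r
    rw [← key, hr, mul_zero]

lemma card_aniso :
    #(univ.filter fun t : F × F × F × F =>
        ∀ x y : F, t.1 * x ^ 3 + t.2.1 * x ^ 2 * y + t.2.2.1 * x * y ^ 2 + t.2.2.2 * y ^ 3 = 0
          → x = 0 ∧ y = 0)
      = (Fintype.card F - 1)
        * #(univ.filter fun p : F × F × F => ∀ r : F, cubEv p r ≠ 0) := by
  have hcard : (Fintype.card F - 1)
        * #(univ.filter fun p : F × F × F => ∀ r : F, cubEv p r ≠ 0)
      = #((univ.filter fun a : F => a ≠ 0)
          ×ˢ (univ.filter fun p : F × F × F => ∀ r : F, cubEv p r ≠ 0)) := by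
    rw [card_product]
    congr 1
    rw [filter_ne', card_erase_of_mem (mem_univ 0), card_univ]
  rw [hcard]
  refine card_nbij'
    (fun t => (t.1, (t.2.1 * t.1⁻¹, t.2.2.1 * t.1⁻¹, t.2.2.2 * t.1⁻¹)))
    (fun v => (v.1, v.2.1 * v.1, v.2.2.1 * v.1, v.2.2.2 * v.1)) ?_ ?_ ?_ ?_
  · rintro ⟨a, b, c, d⟩ ht
    simp only [mem_coe, mem_filter, mem_univ, true_and] at ht
    rw [aniso_iff] at ht
    obtain ⟨ha, hroot⟩ := ht
    simp only [mem_coe, mem_product, mem_filter, mem_univ, true_and]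
    exact ⟨ha, (div_root_iff ha b c d).2 hroot⟩
  · rintro ⟨a, b, c, d⟩ hv
    simp only [mem_coe, mem_product, mem_filter, mem_univ, true_and] at hv
    obtain ⟨ha, hroot⟩ := hv
    simp only [mem_coe, mem_filter, mem_univ, true_and]
    rw [aniso_iff]
    refine ⟨ha, fun r hr => ?_⟩
    apply hroot r
    have : a * cubEv (b, c, d) r
        = a * r ^ 3 + b * a * r ^ 2 + c * a * r + d * a := by
      simp only [cubEv]; ring
    have h0 : a * cubEv (b, c, d) r = 0 := by rw [this, hr]
    exact (mul_eq_zero.1 h0).resolve_left ha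
  · rintro ⟨a, b, c, d⟩ ht
    simp only [mem_coe, mem_filter, mem_univ, true_and] at ht
    rw [aniso_iff] at ht
    have ha := ht.1
    exact Prod.ext rfl (Prod.ext (inv_mul_cancel_right₀ ha b)
      (Prod.ext (inv_mul_cancel_right₀ ha c) (inv_mul_cancel_right₀ ha d)))
  · rintro ⟨a, b, c, d⟩ hv
    simp only [mem_coe, mem_product, mem_filter, mem_univ, true_and] at hv
    have ha := hv.1
    exact Prod.ext rfl (Prod.ext (mul_inv_cancel_right₀ ha b)
      (Prod.ext (mul_inv_cancel_right₀ ha c) (mul_inv_cancel_right₀ ha d)))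

end CountBinaryCubics

open Finset CountBinaryCubics in
/-- The number of binary cubic forms `aX³ + bX²Y + cXY² + dY³` over a finite field `F_q` with
`q` elements having no nontrivial zero in `F_q²` (equivalently, with three conjugate roots
in a cubic extension) equals `q(q²−1)(q−1)/3`. -/
theorem count_binary_cubics_anisotropic
    (F : Type*) [Field F] [Fintype F] (q : ℕ) (hq : Fintype.card F = q) :
    3 * Nat.card {t : F × F × F × F |
        ∀ x y : F,
          t.1 * x ^ 3 + t.2.1 * x ^ 2 * y + t.2.2.1 * x * y ^ 2 + t.2.2.2 * y ^ 3 = 0 →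
            x = 0 ∧ y = 0} =
      q * (q ^ 2 - 1) * (q - 1) := by
  classical
  subst hq
  set q := Fintype.card F with hq
  have hNat : Nat.card {t : F × F × F × F |
      ∀ x y : F,
        t.1 * x ^ 3 + t.2.1 * x ^ 2 * y + t.2.2.1 * x * y ^ 2 + t.2.2.2 * y ^ 3 = 0 →
          x = 0 ∧ y = 0}
      = #(univ.filter fun t : F × F × F × F =>
          ∀ x y : F, t.1 * x ^ 3 + t.2.1 * x ^ 2 * y + t.2.2.1 * x * y ^ 2 + t.2.2.2 * y ^ 3 = 0
            → x = 0 ∧ y = 0) := by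
    rw [Nat.card_coe_set_eq, Set.ncard_eq_toFinset_card']
    congr 1
    ext t
    simp
  rw [hNat, card_aniso]
  have h3 := three_mul_rootless (F := F)
  set M := #(univ.filter fun p : F × F × F => ∀ r : F, cubEv p r ≠ 0) with hM
  have hq2 : 2 ≤ q := Fintype.one_lt_card
  have h1 : 1 ≤ q ^ 2 := by nlinarith
  have hle : q ≤ q ^ 3 := by nlinarith
  have e1 : q * (q ^ 2 - 1) = q ^ 3 - q := by
    zify [h1, hle]
    ring
  rw [e1, ← h3]
  ring
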